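/- The vectors r̃, r_S, r_T all lie in the kernel of G′ (i.e. G′·r̃ = G′·r_S = G′·r_T = 0), and G′ has rank 18 over ℚ, so its kernel is exactly the span of r̃, r_S, r_T. (These are the three linear-equivalence relations (1), (2), (3) among the 21 classes E_0,…,E_18, S, T on a generic M-polarised K3 surface.) -/

import Mathlib

/-- Adjacency relation of the dual graph: edges `{i, i+1}` for `1 ≤ i ≤ 16`,
together with `{0, 3}` and `{15, 18}`. -/
def adj (i j : ℕ) : Bool :=
  (1 ≤ i && i ≤ 16 && j == i + 1) || (1 ≤ j && j ≤ 16 && i == j + 1) ||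
  (i == 0 && j == 3) || (i == 3 && j == 0) || (i == 15 && j == 18) || (i == 18 && j == 15)

/-- The Gram matrix of the 19 classes `E_0, …, E_18`. -/
def G : Matrix (Fin 19) (Fin 19) ℤ :=
  Matrix.of fun i j => if i = j then -2 else if adj i.val j.val then 1 else 0

/-- The entries of `G'` in the rows and columns indexed by 19 (the curve `S`)
and 20 (the curve `T`). -/
def ext (i j : ℕ) : ℤ :=
  if i = 19 then
    (if j = 19 then 0 else if j = 20 then 2 else if j = 1 ∨ j = 17 then 1 else 0)
  else if i = 20 then
    (if j = 19 then 2 else if j = 20 then 2 else if j = 0 ∨ j = 18 then 1 else 0)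
  else if j = 19 then (if i = 1 ∨ i = 17 then 1 else 0)
  else (if i = 0 ∨ i = 18 then 1 else 0)

/-- The 21×21 Gram matrix `G'` of the classes `E_0, …, E_18, S, T`. -/
def G' : Matrix (Fin 21) (Fin 21) ℤ :=
  Matrix.of fun i j =>
    if h : i.val < 19 ∧ j.val < 19 then G ⟨i.val, h.1⟩ ⟨j.val, h.2⟩ else ext i.val j.val

/-- The relation vector `r̃ = (r, 0, 0) ∈ ℤ^21`. -/
def rt : Fin 21 → ℤ :=
  ![3, 2, 4, 6, 5, 4, 3, 2, 1, 0, -1, -2, -3, -4, -5, -6, -4, -2, -3, 0, 0]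

/-- The relation vector `r_S = (s, -1, 0) ∈ ℤ^21`. -/
def rS : Fin 21 → ℤ :=
  ![1, 0, 1, 2, 2, 2, 2, 2, 2, 2, 2, 2, 2, 2, 2, 2, 1, 0, 1, -1, 0]

/-- The relation vector `r_T = (t, 0, -1) ∈ ℤ^21`. -/
def rT : Fin 21 → ℤ :=
  ![1, 1, 2, 3, 3, 3, 3, 3, 3, 3, 3, 3, 3, 3, 3, 3, 2, 1, 1, 0, -1]

set_option maxHeartbeats 2000000 in
/-- `r̃, r_S, r_T` lie in the kernel of `G'`, and `G'` has rank 18 over `ℚ`,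
so its kernel is exactly the span of `r̃, r_S, r_T`. -/
theorem G'_kernel :
    G'.mulVec rt = 0 ∧ G'.mulVec rS = 0 ∧ G'.mulVec rT = 0 ∧
    (G'.map (Int.cast : ℤ → ℚ)).rank = 18 ∧
    ∀ v : Fin 21 → ℚ,
      (G'.map (Int.cast : ℤ → ℚ)).mulVec v = 0 ↔
        ∃ a b c : ℚ, v = a • (fun i => (rt i : ℚ)) + b • (fun i => (rS i : ℚ))
          + c • (fun i => (rT i : ℚ)) := by
  have hrt : G'.mulVec rt = 0 := by decide
  have hrS : G'.mulVec rS = 0 := by decide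
  have hrT : G'.mulVec rT = 0 := by decide
  have m1 : (G'.map (Int.cast : ℤ → ℚ)).mulVec (fun i => (rt i : ℚ)) = 0 := by
    funext i
    have h := (RingHom.map_mulVec (Int.castRingHom ℚ) G' rt i).symm
    rw [hrt] at h
    simpa [Int.coe_castRingHom, Function.comp_def] using h
  have m2 : (G'.map (Int.cast : ℤ → ℚ)).mulVec (fun i => (rS i : ℚ)) = 0 := by
    funext i
    have h := (RingHom.map_mulVec (Int.castRingHom ℚ) G' rS i).symm
    rw [hrS] at h
    simpa [Int.coe_castRingHom, Function.comp_def] using h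
  have m3 : (G'.map (Int.cast : ℤ → ℚ)).mulVec (fun i => (rT i : ℚ)) = 0 := by
    funext i
    have h := (RingHom.map_mulVec (Int.castRingHom ℚ) G' rT i).symm
    rw [hrT] at h
    simpa [Int.coe_castRingHom, Function.comp_def] using h
  have crt0 : ((rt (0:Fin 21) : ℤ) : ℚ) = 3 := by
    norm_num [show (rt (0:Fin 21) : ℤ) = 3 from by decide]
  have crt1 : ((rt (1:Fin 21) : ℤ) : ℚ) = 2 := by
    norm_num [show (rt (1:Fin 21) : ℤ) = 2 from by decide]
  have crt2 : ((rt (2:Fin 21) : ℤ) : ℚ) = 4 := by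
    norm_num [show (rt (2:Fin 21) : ℤ) = 4 from by decide]
  have crt3 : ((rt (3:Fin 21) : ℤ) : ℚ) = 6 := by
    norm_num [show (rt (3:Fin 21) : ℤ) = 6 from by decide]
  have crt4 : ((rt (4:Fin 21) : ℤ) : ℚ) = 5 := by
    norm_num [show (rt (4:Fin 21) : ℤ) = 5 from by decide]
  have crt5 : ((rt (5:Fin 21) : ℤ) : ℚ) = 4 := by
    norm_num [show (rt (5:Fin 21) : ℤ) = 4 from by decide]
  have crt6 : ((rt (6:Fin 21) : ℤ) : ℚ) = 3 := by
    norm_num [show (rt (6:Fin 21) : ℤ) = 3 from by decide]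
  have crt7 : ((rt (7:Fin 21) : ℤ) : ℚ) = 2 := by
    norm_num [show (rt (7:Fin 21) : ℤ) = 2 from by decide]
  have crt8 : ((rt (8:Fin 21) : ℤ) : ℚ) = 1 := by
    norm_num [show (rt (8:Fin 21) : ℤ) = 1 from by decide]
  have crt9 : ((rt (9:Fin 21) : ℤ) : ℚ) = 0 := by
    norm_num [show (rt (9:Fin 21) : ℤ) = 0 from by decide]
  have crt10 : ((rt (10:Fin 21) : ℤ) : ℚ) = -1 := by
    norm_num [show (rt (10:Fin 21) : ℤ) = -1 from by decide]
  have crt11 : ((rt (11:Fin 21) : ℤ) : ℚ) = -2 := by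
    norm_num [show (rt (11:Fin 21) : ℤ) = -2 from by decide]
  have crt12 : ((rt (12:Fin 21) : ℤ) : ℚ) = -3 := by
    norm_num [show (rt (12:Fin 21) : ℤ) = -3 from by decide]
  have crt13 : ((rt (13:Fin 21) : ℤ) : ℚ) = -4 := by
    norm_num [show (rt (13:Fin 21) : ℤ) = -4 from by decide]
  have crt14 : ((rt (14:Fin 21) : ℤ) : ℚ) = -5 := by
    norm_num [show (rt (14:Fin 21) : ℤ) = -5 from by decide]
  have crt15 : ((rt (15:Fin 21) : ℤ) : ℚ) = -6 := by
    norm_num [show (rt (15:Fin 21) : ℤ) = -6 from by decide]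
  have crt16 : ((rt (16:Fin 21) : ℤ) : ℚ) = -4 := by
    norm_num [show (rt (16:Fin 21) : ℤ) = -4 from by decide]
  have crt17 : ((rt (17:Fin 21) : ℤ) : ℚ) = -2 := by
    norm_num [show (rt (17:Fin 21) : ℤ) = -2 from by decide]
  have crt18 : ((rt (18:Fin 21) : ℤ) : ℚ) = -3 := by
    norm_num [show (rt (18:Fin 21) : ℤ) = -3 from by decide]
  have crt19 : ((rt (19:Fin 21) : ℤ) : ℚ) = 0 := by
    norm_num [show (rt (19:Fin 21) : ℤ) = 0 from by decide]
  have crt20 : ((rt (20:Fin 21) : ℤ) : ℚ) = 0 := by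
    norm_num [show (rt (20:Fin 21) : ℤ) = 0 from by decide]
  have crS0 : ((rS (0:Fin 21) : ℤ) : ℚ) = 1 := by
    norm_num [show (rS (0:Fin 21) : ℤ) = 1 from by decide]
  have crS1 : ((rS (1:Fin 21) : ℤ) : ℚ) = 0 := by
    norm_num [show (rS (1:Fin 21) : ℤ) = 0 from by decide]
  have crS2 : ((rS (2:Fin 21) : ℤ) : ℚ) = 1 := by
    norm_num [show (rS (2:Fin 21) : ℤ) = 1 from by decide]
  have crS3 : ((rS (3:Fin 21) : ℤ) : ℚ) = 2 := by
    norm_num [show (rS (3:Fin 21) : ℤ) = 2 from by decide]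
  have crS4 : ((rS (4:Fin 21) : ℤ) : ℚ) = 2 := by
    norm_num [show (rS (4:Fin 21) : ℤ) = 2 from by decide]
  have crS5 : ((rS (5:Fin 21) : ℤ) : ℚ) = 2 := by
    norm_num [show (rS (5:Fin 21) : ℤ) = 2 from by decide]
  have crS6 : ((rS (6:Fin 21) : ℤ) : ℚ) = 2 := by
    norm_num [show (rS (6:Fin 21) : ℤ) = 2 from by decide]
  have crS7 : ((rS (7:Fin 21) : ℤ) : ℚ) = 2 := by
    norm_num [show (rS (7:Fin 21) : ℤ) = 2 from by decide]
  have crS8 : ((rS (8:Fin 21) : ℤ) : ℚ) = 2 := by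
    norm_num [show (rS (8:Fin 21) : ℤ) = 2 from by decide]
  have crS9 : ((rS (9:Fin 21) : ℤ) : ℚ) = 2 := by
    norm_num [show (rS (9:Fin 21) : ℤ) = 2 from by decide]
  have crS10 : ((rS (10:Fin 21) : ℤ) : ℚ) = 2 := by
    norm_num [show (rS (10:Fin 21) : ℤ) = 2 from by decide]
  have crS11 : ((rS (11:Fin 21) : ℤ) : ℚ) = 2 := by
    norm_num [show (rS (11:Fin 21) : ℤ) = 2 from by decide]
  have crS12 : ((rS (12:Fin 21) : ℤ) : ℚ) = 2 := by
    norm_num [show (rS (12:Fin 21) : ℤ) = 2 from by decide]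
  have crS13 : ((rS (13:Fin 21) : ℤ) : ℚ) = 2 := by
    norm_num [show (rS (13:Fin 21) : ℤ) = 2 from by decide]
  have crS14 : ((rS (14:Fin 21) : ℤ) : ℚ) = 2 := by
    norm_num [show (rS (14:Fin 21) : ℤ) = 2 from by decide]
  have crS15 : ((rS (15:Fin 21) : ℤ) : ℚ) = 2 := by
    norm_num [show (rS (15:Fin 21) : ℤ) = 2 from by decide]
  have crS16 : ((rS (16:Fin 21) : ℤ) : ℚ) = 1 := by
    norm_num [show (rS (16:Fin 21) : ℤ) = 1 from by decide]
  have crS17 : ((rS (17:Fin 21) : ℤ) : ℚ) = 0 := by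
    norm_num [show (rS (17:Fin 21) : ℤ) = 0 from by decide]
  have crS18 : ((rS (18:Fin 21) : ℤ) : ℚ) = 1 := by
    norm_num [show (rS (18:Fin 21) : ℤ) = 1 from by decide]
  have crS19 : ((rS (19:Fin 21) : ℤ) : ℚ) = -1 := by
    norm_num [show (rS (19:Fin 21) : ℤ) = -1 from by decide]
  have crS20 : ((rS (20:Fin 21) : ℤ) : ℚ) = 0 := by
    norm_num [show (rS (20:Fin 21) : ℤ) = 0 from by decide]
  have crT0 : ((rT (0:Fin 21) : ℤ) : ℚ) = 1 := by
    norm_num [show (rT (0:Fin 21) : ℤ) = 1 from by decide]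
  have crT1 : ((rT (1:Fin 21) : ℤ) : ℚ) = 1 := by
    norm_num [show (rT (1:Fin 21) : ℤ) = 1 from by decide]
  have crT2 : ((rT (2:Fin 21) : ℤ) : ℚ) = 2 := by
    norm_num [show (rT (2:Fin 21) : ℤ) = 2 from by decide]
  have crT3 : ((rT (3:Fin 21) : ℤ) : ℚ) = 3 := by
    norm_num [show (rT (3:Fin 21) : ℤ) = 3 from by decide]
  have crT4 : ((rT (4:Fin 21) : ℤ) : ℚ) = 3 := by
    norm_num [show (rT (4:Fin 21) : ℤ) = 3 from by decide]
  have crT5 : ((rT (5:Fin 21) : ℤ) : ℚ) = 3 := by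
    norm_num [show (rT (5:Fin 21) : ℤ) = 3 from by decide]
  have crT6 : ((rT (6:Fin 21) : ℤ) : ℚ) = 3 := by
    norm_num [show (rT (6:Fin 21) : ℤ) = 3 from by decide]
  have crT7 : ((rT (7:Fin 21) : ℤ) : ℚ) = 3 := by
    norm_num [show (rT (7:Fin 21) : ℤ) = 3 from by decide]
  have crT8 : ((rT (8:Fin 21) : ℤ) : ℚ) = 3 := by
    norm_num [show (rT (8:Fin 21) : ℤ) = 3 from by decide]
  have crT9 : ((rT (9:Fin 21) : ℤ) : ℚ) = 3 := by
    norm_num [show (rT (9:Fin 21) : ℤ) = 3 from by decide]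
  have crT10 : ((rT (10:Fin 21) : ℤ) : ℚ) = 3 := by
    norm_num [show (rT (10:Fin 21) : ℤ) = 3 from by decide]
  have crT11 : ((rT (11:Fin 21) : ℤ) : ℚ) = 3 := by
    norm_num [show (rT (11:Fin 21) : ℤ) = 3 from by decide]
  have crT12 : ((rT (12:Fin 21) : ℤ) : ℚ) = 3 := by
    norm_num [show (rT (12:Fin 21) : ℤ) = 3 from by decide]
  have crT13 : ((rT (13:Fin 21) : ℤ) : ℚ) = 3 := by
    norm_num [show (rT (13:Fin 21) : ℤ) = 3 from by decide]
  have crT14 : ((rT (14:Fin 21) : ℤ) : ℚ) = 3 := by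
    norm_num [show (rT (14:Fin 21) : ℤ) = 3 from by decide]
  have crT15 : ((rT (15:Fin 21) : ℤ) : ℚ) = 3 := by
    norm_num [show (rT (15:Fin 21) : ℤ) = 3 from by decide]
  have crT16 : ((rT (16:Fin 21) : ℤ) : ℚ) = 2 := by
    norm_num [show (rT (16:Fin 21) : ℤ) = 2 from by decide]
  have crT17 : ((rT (17:Fin 21) : ℤ) : ℚ) = 1 := by
    norm_num [show (rT (17:Fin 21) : ℤ) = 1 from by decide]
  have crT18 : ((rT (18:Fin 21) : ℤ) : ℚ) = 1 := by
    norm_num [show (rT (18:Fin 21) : ℤ) = 1 from by decide]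
  have crT19 : ((rT (19:Fin 21) : ℤ) : ℚ) = 0 := by
    norm_num [show (rT (19:Fin 21) : ℤ) = 0 from by decide]
  have crT20 : ((rT (20:Fin 21) : ℤ) : ℚ) = -1 := by
    norm_num [show (rT (20:Fin 21) : ℤ) = -1 from by decide]
  have hiff : ∀ v : Fin 21 → ℚ,
      (G'.map (Int.cast : ℤ → ℚ)).mulVec v = 0 ↔
        ∃ a b c : ℚ, v = a • (fun i => (rt i : ℚ)) + b • (fun i => (rS i : ℚ))
          + c • (fun i => (rT i : ℚ)) := by
    intro v
    constructor
    · intro h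
      have h0 := congrFun h ⟨0, by norm_num⟩
      rw [Matrix.mulVec, dotProduct, Finset.sum_fin_eq_sum_range] at h0
      simp [Finset.sum_range_succ, G', G, ext, adj, Matrix.map_apply, show ((0:Fin 21):ℕ) = 0 from rfl] at h0
      have h1 := congrFun h ⟨1, by norm_num⟩
      rw [Matrix.mulVec, dotProduct, Finset.sum_fin_eq_sum_range] at h1
      simp [Finset.sum_range_succ, G', G, ext, adj, Matrix.map_apply, show ((1:Fin 21):ℕ) = 1 from rfl] at h1
      have h2 := congrFun h ⟨2, by norm_num⟩
      rw [Matrix.mulVec, dotProduct, Finset.sum_fin_eq_sum_range] at h2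
      simp [Finset.sum_range_succ, G', G, ext, adj, Matrix.map_apply, show ((2:Fin 21):ℕ) = 2 from rfl] at h2
      have h3 := congrFun h ⟨3, by norm_num⟩
      rw [Matrix.mulVec, dotProduct, Finset.sum_fin_eq_sum_range] at h3
      simp [Finset.sum_range_succ, G', G, ext, adj, Matrix.map_apply, show ((3:Fin 21):ℕ) = 3 from rfl] at h3
      have h4 := congrFun h ⟨4, by norm_num⟩
      rw [Matrix.mulVec, dotProduct, Finset.sum_fin_eq_sum_range] at h4
      simp [Finset.sum_range_succ, G', G, ext, adj, Matrix.map_apply, show ((4:Fin 21):ℕ) = 4 from rfl] at h4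
      have h5 := congrFun h ⟨5, by norm_num⟩
      rw [Matrix.mulVec, dotProduct, Finset.sum_fin_eq_sum_range] at h5
      simp [Finset.sum_range_succ, G', G, ext, adj, Matrix.map_apply, show ((5:Fin 21):ℕ) = 5 from rfl] at h5
      have h6 := congrFun h ⟨6, by norm_num⟩
      rw [Matrix.mulVec, dotProduct, Finset.sum_fin_eq_sum_range] at h6
      simp [Finset.sum_range_succ, G', G, ext, adj, Matrix.map_apply, show ((6:Fin 21):ℕ) = 6 from rfl] at h6
      have h7 := congrFun h ⟨7, by norm_num⟩
      rw [Matrix.mulVec, dotProduct, Finset.sum_fin_eq_sum_range] at h7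
      simp [Finset.sum_range_succ, G', G, ext, adj, Matrix.map_apply, show ((7:Fin 21):ℕ) = 7 from rfl] at h7
      have h8 := congrFun h ⟨8, by norm_num⟩
      rw [Matrix.mulVec, dotProduct, Finset.sum_fin_eq_sum_range] at h8
      simp [Finset.sum_range_succ, G', G, ext, adj, Matrix.map_apply, show ((8:Fin 21):ℕ) = 8 from rfl] at h8
      have h9 := congrFun h ⟨9, by norm_num⟩
      rw [Matrix.mulVec, dotProduct, Finset.sum_fin_eq_sum_range] at h9
      simp [Finset.sum_range_succ, G', G, ext, adj, Matrix.map_apply, show ((9:Fin 21):ℕ) = 9 from rfl] at h9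
      have h10 := congrFun h ⟨10, by norm_num⟩
      rw [Matrix.mulVec, dotProduct, Finset.sum_fin_eq_sum_range] at h10
      simp [Finset.sum_range_succ, G', G, ext, adj, Matrix.map_apply, show ((10:Fin 21):ℕ) = 10 from rfl] at h10
      have h11 := congrFun h ⟨11, by norm_num⟩
      rw [Matrix.mulVec, dotProduct, Finset.sum_fin_eq_sum_range] at h11
      simp [Finset.sum_range_succ, G', G, ext, adj, Matrix.map_apply, show ((11:Fin 21):ℕ) = 11 from rfl] at h11
      have h12 := congrFun h ⟨12, by norm_num⟩
      rw [Matrix.mulVec, dotProduct, Finset.sum_fin_eq_sum_range] at h12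
      simp [Finset.sum_range_succ, G', G, ext, adj, Matrix.map_apply, show ((12:Fin 21):ℕ) = 12 from rfl] at h12
      have h13 := congrFun h ⟨13, by norm_num⟩
      rw [Matrix.mulVec, dotProduct, Finset.sum_fin_eq_sum_range] at h13
      simp [Finset.sum_range_succ, G', G, ext, adj, Matrix.map_apply, show ((13:Fin 21):ℕ) = 13 from rfl] at h13
      have h14 := congrFun h ⟨14, by norm_num⟩
      rw [Matrix.mulVec, dotProduct, Finset.sum_fin_eq_sum_range] at h14
      simp [Finset.sum_range_succ, G', G, ext, adj, Matrix.map_apply, show ((14:Fin 21):ℕ) = 14 from rfl] at h14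
      have h15 := congrFun h ⟨15, by norm_num⟩
      rw [Matrix.mulVec, dotProduct, Finset.sum_fin_eq_sum_range] at h15
      simp [Finset.sum_range_succ, G', G, ext, adj, Matrix.map_apply, show ((15:Fin 21):ℕ) = 15 from rfl] at h15
      have h16 := congrFun h ⟨16, by norm_num⟩
      rw [Matrix.mulVec, dotProduct, Finset.sum_fin_eq_sum_range] at h16
      simp [Finset.sum_range_succ, G', G, ext, adj, Matrix.map_apply, show ((16:Fin 21):ℕ) = 16 from rfl] at h16
      have h17 := congrFun h ⟨17, by norm_num⟩
      rw [Matrix.mulVec, dotProduct, Finset.sum_fin_eq_sum_range] at h17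
      simp [Finset.sum_range_succ, G', G, ext, adj, Matrix.map_apply, show ((17:Fin 21):ℕ) = 17 from rfl] at h17
      have h18 := congrFun h ⟨18, by norm_num⟩
      rw [Matrix.mulVec, dotProduct, Finset.sum_fin_eq_sum_range] at h18
      simp [Finset.sum_range_succ, G', G, ext, adj, Matrix.map_apply, show ((18:Fin 21):ℕ) = 18 from rfl] at h18
      have h19 := congrFun h ⟨19, by norm_num⟩
      rw [Matrix.mulVec, dotProduct, Finset.sum_fin_eq_sum_range] at h19
      simp [Finset.sum_range_succ, G', G, ext, adj, Matrix.map_apply, show ((19:Fin 21):ℕ) = 19 from rfl] at h19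
      have h20 := congrFun h ⟨20, by norm_num⟩
      rw [Matrix.mulVec, dotProduct, Finset.sum_fin_eq_sum_range] at h20
      simp [Finset.sum_range_succ, G', G, ext, adj, Matrix.map_apply, show ((20:Fin 21):ℕ) = 20 from rfl] at h20
      refine ⟨v 8 + 2 * v 19 + 3 * v 20, -v 19, -v 20, ?_⟩
      funext i
      fin_cases i <;> simp [crt0, crt1, crt2, crt3, crt4, crt5, crt6, crt7, crt8, crt9, crt10, crt11, crt12, crt13, crt14, crt15, crt16, crt17, crt18, crt19, crt20, crS0, crS1, crS2, crS3, crS4, crS5, crS6, crS7, crS8, crS9, crS10, crS11, crS12, crS13, crS14, crS15, crS16, crS17, crS18, crS19, crS20, crT0, crT1, crT2, crT3, crT4, crT5, crT6, crT7, crT8, crT9, crT10, crT11, crT12, crT13, crT14, crT15, crT16, crT17, crT18, crT19, crT20] <;> linarith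
    · rintro ⟨a, b, c, rfl⟩
      simp [Matrix.mulVec_add, Matrix.mulVec_smul, m1, m2, m3]
  refine ⟨hrt, hrS, hrT, ?_, hiff⟩
  have hk : LinearMap.ker (Matrix.mulVecLin (G'.map (Int.cast : ℤ → ℚ))) =
      Submodule.span ℚ (Set.range
        ![(fun i => (rt i : ℚ)), (fun i => (rS i : ℚ)), (fun i => (rT i : ℚ))]) := by
    ext v
    rw [LinearMap.mem_ker, Matrix.mulVecLin_apply, hiff v,
      Submodule.mem_span_range_iff_exists_fun]
    constructor
    · rintro ⟨a, b, c, rfl⟩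
      refine ⟨![a, b, c], ?_⟩
      simp [Fin.sum_univ_three]
    · rintro ⟨cf, rfl⟩
      refine ⟨cf 0, cf 1, cf 2, ?_⟩
      simp [Fin.sum_univ_three]
  have hli : LinearIndependent ℚ
      ![(fun i => (rt i : ℚ)), (fun i => (rS i : ℚ)), (fun i => (rT i : ℚ))] := by
    rw [Fintype.linearIndependent_iff]
    intro g hg
    simp only [Fin.sum_univ_three, Matrix.cons_val_zero, Matrix.cons_val_one,
      Matrix.head_cons, Matrix.cons_val_two, Matrix.tail_cons] at hg
    have e19 := congrFun hg 19
    have e20 := congrFun hg 20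
    have e8 := congrFun hg 8
    simp [crt0, crt1, crt2, crt3, crt4, crt5, crt6, crt7, crt8, crt9, crt10, crt11, crt12, crt13, crt14, crt15, crt16, crt17, crt18, crt19, crt20, crS0, crS1, crS2, crS3, crS4, crS5, crS6, crS7, crS8, crS9, crS10, crS11, crS12, crS13, crS14, crS15, crS16, crS17, crS18, crS19, crS20, crT0, crT1, crT2, crT3, crT4, crT5, crT6, crT7, crT8, crT9, crT10, crT11, crT12, crT13, crT14, crT15, crT16, crT17, crT18, crT19, crT20] at e19 e20 e8
    intro i
    fin_cases i <;> simp <;> linarith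
  have hcard : Module.finrank ℚ (LinearMap.ker
      (Matrix.mulVecLin (G'.map (Int.cast : ℤ → ℚ)))) = 3 := by
    rw [hk, finrank_span_eq_card hli]
    simp
  have hrn := LinearMap.finrank_range_add_finrank_ker
    (Matrix.mulVecLin (G'.map (Int.cast : ℤ → ℚ)))
  rw [hcard, Module.finrank_pi, Fintype.card_fin] at hrn
  rw [Matrix.rank]
  omega
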